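/- Let n ≥ 1 be a natural number, p ∈ (0,1), q = 1 − p, and μ₁, μ₀, σ₁², σ₀² real numbers with σ₁², σ₀² ≥ 0. Let (Ω, 𝔉, μ) be a probability space, A : Ω → ℕ a random variable following the binomial distribution Bin(n, p), and set N = n + 2, N₁ = 1 + A, N₀ = n + 1 − A. Let T be a square-integrable real random variable such that almost surely E[T ∣ σ(A)] = (N₁/(N p)) μ₁ − (N₀/(N q)) μ₀ and E[(T − E[T ∣ σ(A)])² ∣ σ(A)] = N₁ σ₁²/(N p)² + N₀ σ₀²/(N q)². Then Var(T) = (μ₁/p + μ₀/q)² · n p q/(n + 2)² + σ₁² (n p + 1)/((n + 2)² p²) + σ₀² (n q + 1)/((n + 2)² q²). -/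

import Mathlib

open MeasureTheory ProbabilityTheory

lemma binom_sum0 (n : ℕ) (x y : ℝ) :
    ∑ k ∈ Finset.range (n+1), (n.choose k : ℝ) * x^k * y^(n-k) = (x+y)^n := by
  rw [add_pow]
  exact Finset.sum_congr rfl fun k _ => by ring

lemma binom_sum1 (n : ℕ) (x y : ℝ) :
    ∑ k ∈ Finset.range (n+1), (k:ℝ) * ((n.choose k : ℝ) * x^k * y^(n-k))
      = n * x * (x+y)^(n-1) := by
  cases n with
  | zero => simp
  | succ m =>
    rw [Finset.sum_range_succ']
    have h : ∀ k ∈ Finset.range (m+1),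
        ((k+1 : ℕ):ℝ) * (((m+1).choose (k+1) : ℝ) * x^(k+1) * y^(m+1-(k+1)))
          = ((m:ℝ)+1) * x * ((m.choose k : ℝ) * x^k * y^(m-k)) := by
      intro k hk
      have hc : ((m:ℝ)+1) * (m.choose k : ℝ) = (((m+1).choose (k+1) : ℕ) : ℝ) * ((k:ℝ)+1) := by
        exact_mod_cast congrArg (Nat.cast (R := ℝ)) (Nat.add_one_mul_choose_eq m k)
      have hy : m+1-(k+1) = m - k := by omega
      rw [hy, pow_succ]
      push_cast
      linear_combination (-(x^k * x * y^(m-k))) * hc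
    rw [Finset.sum_congr rfl h, ← Finset.mul_sum, binom_sum0]
    push_cast
    ring

lemma binom_sum2 (n : ℕ) (x y : ℝ) :
    ∑ k ∈ Finset.range (n+1), (k:ℝ) * ((k:ℝ)-1) * ((n.choose k : ℝ) * x^k * y^(n-k))
      = n * ((n:ℝ)-1) * x^2 * (x+y)^(n-2) := by
  match n with
  | 0 => simp
  | 1 => norm_num [Finset.sum_range_succ]
  | (m+2) =>
    rw [Finset.sum_range_succ', Finset.sum_range_succ']
    have h : ∀ k ∈ Finset.range (m+1),
        ((k+1+1 : ℕ):ℝ) * (((k+1+1 : ℕ):ℝ)-1)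
            * (((m+2).choose (k+1+1) : ℝ) * x^(k+1+1) * y^(m+2-(k+1+1)))
          = ((m:ℝ)+2) * ((m:ℝ)+1) * x^2 * ((m.choose k : ℝ) * x^k * y^(m-k)) := by
      intro k hk
      have hc1 : ((m:ℝ)+1) * (m.choose k : ℝ) = (((m+1).choose (k+1) : ℕ) : ℝ) * ((k:ℝ)+1) := by
        exact_mod_cast congrArg (Nat.cast (R := ℝ)) (Nat.add_one_mul_choose_eq m k)
      have hc2 : ((m:ℝ)+2) * ((m+1).choose (k+1) : ℝ)
          = (((m+2).choose (k+2) : ℕ) : ℝ) * ((k:ℝ)+2) := by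
        exact_mod_cast congrArg (Nat.cast (R := ℝ)) (Nat.add_one_mul_choose_eq (m+1) (k+1))
      have hy : m+2-(k+1+1) = m - k := by omega
      rw [hy, pow_succ, pow_succ]
      push_cast
      linear_combination (-(x^k * x * x * y^(m-k) * ((k:ℝ)+1))) * hc2
        + (-(((m:ℝ)+2) * x^k * x * x * y^(m-k))) * hc1
    rw [Finset.sum_congr rfl h, ← Finset.mul_sum, binom_sum0]
    push_cast
    ring

/-- Law-of-total-variance decomposition for the true-propensity-score IPW stratum
estimator.  Let `A ~ Bin(n, p)` on a probability space `(Ω, 𝔉, μ)`, and let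
`N = n + 2`, `N₁ = 1 + A`, `N₀ = n + 1 - A`.  If `T` is square-integrable with
a.s. conditional mean `(N₁/(N p)) μ₁ - (N₀/(N q)) μ₀` and a.s. conditional variance
`N₁ σ₁²/(N p)² + N₀ σ₀²/(N q)²` given `σ(A)`, then
`Var(T) = (μ₁/p + μ₀/q)² n p q/(n+2)² + σ₁² (n p + 1)/((n+2)² p²)
  + σ₀² (n q + 1)/((n+2)² q²)`. -/
theorem variance_true_ps_ipw (n : ℕ) (hn : 1 ≤ n) (p q : ℝ)
    (hp0 : 0 < p) (hp1 : p < 1) (hq : q = 1 - p)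
    (μ₁ μ₀ σ₁sq σ₀sq : ℝ) (hσ₁ : 0 ≤ σ₁sq) (hσ₀ : 0 ≤ σ₀sq)
    (Ω : Type*) [MeasurableSpace Ω] (μ : Measure Ω) [IsProbabilityMeasure μ]
    (A : Ω → ℕ) (hA : Measurable A) (hAle : ∀ ω, A ω ≤ n)
    (hAdist : ∀ k ≤ n, μ {ω | A ω = k}
      = ENNReal.ofReal ((n.choose k : ℝ) * p ^ k * (1 - p) ^ (n - k)))
    (T : Ω → ℝ) (hT : MemLp T 2 μ)
    (hcondmean : ∀ᵐ ω ∂μ,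
      (μ[T | MeasurableSpace.comap A ⊤]) ω
        = ((1 + (A ω : ℝ)) / (((n : ℝ) + 2) * p)) * μ₁
          - (((n : ℝ) + 1 - (A ω : ℝ)) / (((n : ℝ) + 2) * q)) * μ₀)
    (hcondvar : ∀ᵐ ω ∂μ,
      (μ[(fun ω' => (T ω' - (μ[T | MeasurableSpace.comap A ⊤]) ω') ^ 2) |
          MeasurableSpace.comap A ⊤]) ω
        = (1 + (A ω : ℝ)) * σ₁sq / ((((n : ℝ) + 2) * p) ^ 2)
          + ((n : ℝ) + 1 - (A ω : ℝ)) * σ₀sq / ((((n : ℝ) + 2) * q) ^ 2)) :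
    variance T μ
      = (μ₁ / p + μ₀ / q) ^ 2 * ((n : ℝ) * p * q) / ((n : ℝ) + 2) ^ 2
        + σ₁sq * ((n : ℝ) * p + 1) / (((n : ℝ) + 2) ^ 2 * p ^ 2)
        + σ₀sq * ((n : ℝ) * q + 1) / (((n : ℝ) + 2) ^ 2 * q ^ 2) := by
  have hq0 : 0 < q := by rw [hq]; linarith
  have hN0 : (0:ℝ) < (n:ℝ) + 2 := by positivity
  have hNp : ((n:ℝ)+2) * p ≠ 0 := by positivity
  have hNq : ((n:ℝ)+2) * q ≠ 0 := mul_ne_zero hN0.ne' hq0.ne'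
  have hpq1 : p + q = 1 := by rw [hq]; ring
  have hm : MeasurableSpace.comap A ⊤ ≤ ‹MeasurableSpace Ω› := by
    rintro s ⟨s', -, rfl⟩
    exact hA (show MeasurableSet s' from trivial)
  haveI : SigmaFinite (μ.trim hm) := inferInstance
  have hAm : @Measurable Ω ℕ (MeasurableSpace.comap A ⊤) _ A := fun s _ => ⟨s, trivial, rfl⟩
  have hcompSM : ∀ f : ℕ → ℝ,
      StronglyMeasurable[MeasurableSpace.comap A ⊤] (fun ω => f (A ω)) := fun f =>
    ((measurable_from_top (f := f)).comp hAm).stronglyMeasurable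
  have hsetm : ∀ k : ℕ, MeasurableSet {ω | A ω = k} := fun k => hA (measurableSet_singleton k)
  have hrep : ∀ f : ℕ → ℝ, (fun ω => f (A ω))
      = fun ω => ∑ k ∈ Finset.range (n+1),
          Set.indicator {ω' | A ω' = k} (fun _ => f k) ω := by
    intro f; funext ω
    rw [Finset.sum_eq_single (A ω)]
    · exact (Set.indicator_of_mem (show ω ∈ {ω' | A ω' = A ω} from rfl)
        (fun _ => f (A ω))).symm
    · intro b _ hb
      exact (Set.indicator_of_notMem (fun h => hb ((show A ω = b from h).symm))
        (fun _ => f b)).symm ▸ rfl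
    · intro h
      exact absurd (Finset.mem_range.mpr (Nat.lt_succ_of_le (hAle ω))) h
  have hintc : ∀ f : ℕ → ℝ, Integrable (fun ω => f (A ω)) μ := by
    intro f; rw [hrep f]
    exact integrable_finset_sum _ fun k _ => (integrable_const (f k)).indicator (hsetm k)
  have hmem2 : ∀ f : ℕ → ℝ, MemLp (fun ω => f (A ω)) 2 μ := by
    intro f; rw [hrep f]
    exact memLp_finsetSum _ fun k _ => (memLp_const (f k)).indicator (hsetm k)
  have hP : ∀ k ∈ Finset.range (n+1),
      (μ {ω | A ω = k}).toReal = (n.choose k : ℝ) * p^k * q^(n-k) := by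
    intro k hk
    have hk' : k ≤ n := by
      have := Finset.mem_range.mp hk; omega
    have h1p : (0:ℝ) ≤ 1 - p := by linarith
    rw [hAdist k hk', ENNReal.toReal_ofReal
      (mul_nonneg (mul_nonneg (Nat.cast_nonneg _) (pow_nonneg hp0.le _)) (pow_nonneg h1p _)),
      hq]
  have hkey : ∀ f : ℕ → ℝ, ∫ ω, f (A ω) ∂μ
      = ∑ k ∈ Finset.range (n+1), f k * ((n.choose k : ℝ) * p^k * q^(n-k)) := by
    intro f
    rw [hrep f, integral_finset_sum _ fun k _ => (integrable_const (f k)).indicator (hsetm k)]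
    refine Finset.sum_congr rfl fun k hk => ?_
    rw [integral_indicator_const (f k) (hsetm k), smul_eq_mul, measureReal_def, hP k hk, mul_comm]
  -- moments
  have hS0 : ∑ k ∈ Finset.range (n+1), ((n.choose k:ℝ) * p^k * q^(n-k)) = 1 := by
    rw [binom_sum0, hpq1, one_pow]
  have hS1 : ∑ k ∈ Finset.range (n+1), (k:ℝ) * ((n.choose k:ℝ) * p^k * q^(n-k)) = n*p := by
    rw [binom_sum1, hpq1, one_pow, mul_one]
  have hS2 : ∑ k ∈ Finset.range (n+1), (k:ℝ)*((k:ℝ)-1) * ((n.choose k:ℝ) * p^k * q^(n-k))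
      = (n:ℝ)*((n:ℝ)-1)*p^2 := by
    rw [binom_sum2, hpq1, one_pow, mul_one]
  have hpoly : ∀ a b c : ℝ, ∑ k ∈ Finset.range (n+1),
        (a*((k:ℝ)*((k:ℝ)-1)) + b*(k:ℝ) + c) * ((n.choose k:ℝ) * p^k * q^(n-k))
      = a*((n:ℝ)*((n:ℝ)-1)*p^2) + b*((n:ℝ)*p) + c := by
    intro a b c
    have hrw : ∀ k ∈ Finset.range (n+1),
        (a*((k:ℝ)*((k:ℝ)-1)) + b*(k:ℝ) + c) * ((n.choose k:ℝ) * p^k * q^(n-k))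
          = a*((k:ℝ)*((k:ℝ)-1) * ((n.choose k:ℝ) * p^k * q^(n-k)))
            + (b*((k:ℝ) * ((n.choose k:ℝ) * p^k * q^(n-k)))
              + c*((n.choose k:ℝ) * p^k * q^(n-k))) := fun k _ => by ring
    rw [Finset.sum_congr rfl hrw, Finset.sum_add_distrib, ← Finset.mul_sum,
      Finset.sum_add_distrib, ← Finset.mul_sum, ← Finset.mul_sum, hS0, hS1, hS2, mul_one]
    ring
  -- abbreviations
  set g := μ[T | MeasurableSpace.comap A ⊤] with hg
  set f1 : ℕ → ℝ := fun k =>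
    ((1 + (k:ℝ)) / (((n:ℝ)+2)*p)) * μ₁ - (((n:ℝ)+1 - (k:ℝ)) / (((n:ℝ)+2)*q)) * μ₀ with hf1
  have hgf : g =ᵐ[μ] fun ω => f1 (A ω) := hcondmean
  have hTi : Integrable T μ := hT.integrable one_le_two
  have hgi : Integrable g μ := integrable_condExp
  have hgL2 : MemLp g 2 μ := (hmem2 f1).ae_eq hgf.symm
  set b1 : ℝ := μ₁/(((n:ℝ)+2)*p) + μ₀/(((n:ℝ)+2)*q) with hb1
  set c1 : ℝ := μ₁/(((n:ℝ)+2)*p) - ((n:ℝ)+1)*μ₀/(((n:ℝ)+2)*q) with hc1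
  have hf1lin : ∀ k : ℕ, f1 k = b1*(k:ℝ) + c1 := by
    intro k
    rw [hf1, hb1, hc1]
    field_simp
    ring
  have hET : ∫ x, T x ∂μ = b1*((n:ℝ)*p) + c1 := by
    rw [← integral_condExp (μ := μ) (f := T) hm, ← hg, integral_congr_ae hgf, hkey f1]
    have hc : ∀ k ∈ Finset.range (n+1),
        f1 k * ((n.choose k:ℝ) * p^k * q^(n-k))
          = (0*((k:ℝ)*((k:ℝ)-1)) + b1*(k:ℝ) + c1) * ((n.choose k:ℝ) * p^k * q^(n-k)) := by
      intro k _; rw [hf1lin k]; ring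
    rw [Finset.sum_congr rfl hc, hpoly]
    ring
  set ET : ℝ := b1*((n:ℝ)*p) + c1 with hETdef
  -- conditional variance part
  set f2 : ℕ → ℝ := fun k => (1 + (k:ℝ)) * σ₁sq / ((((n:ℝ)+2)*p)^2)
      + ((n:ℝ)+1-(k:ℝ)) * σ₀sq / ((((n:ℝ)+2)*q)^2) with hf2
  set b2 : ℝ := σ₁sq/((((n:ℝ)+2)*p)^2) - σ₀sq/((((n:ℝ)+2)*q)^2) with hb2
  set c2 : ℝ := σ₁sq/((((n:ℝ)+2)*p)^2) + ((n:ℝ)+1)*σ₀sq/((((n:ℝ)+2)*q)^2) with hc2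
  have hf2lin : ∀ k : ℕ, f2 k = b2*(k:ℝ) + c2 := by
    intro k
    rw [hf2, hb2, hc2]
    field_simp
    ring
  have hsqint : Integrable (fun ω => (T ω - g ω)^2) μ := (hT.sub hgL2).integrable_sq
  have hI1 : ∫ ω, (T ω - g ω)^2 ∂μ = b2*((n:ℝ)*p) + c2 := by
    rw [← integral_condExp (μ := μ) (f := fun ω' => (T ω' - g ω')^2) hm]
    rw [integral_congr_ae (g := fun ω => f2 (A ω)) hcondvar, hkey f2]
    have hc : ∀ k ∈ Finset.range (n+1),
        f2 k * ((n.choose k:ℝ) * p^k * q^(n-k))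
          = (0*((k:ℝ)*((k:ℝ)-1)) + b2*(k:ℝ) + c2) * ((n.choose k:ℝ) * p^k * q^(n-k)) := by
      intro k _; rw [hf2lin k]; ring
    rw [Finset.sum_congr rfl hc, hpoly]
    ring
  -- cross term
  have hecross : (fun ω => (g ω - ET) * (T ω - g ω))
      =ᵐ[μ] fun ω => (f1 (A ω) - ET) * (T ω - g ω) := by
    filter_upwards [hgf] with ω hω
    rw [hω]
  have hbdd : ∃ C, ∀ ω, ‖f1 (A ω) - ET‖ ≤ C :=
    ⟨∑ k ∈ Finset.range (n+1), ‖f1 k - ET‖, fun ω =>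
      Finset.single_le_sum (f := fun k => ‖f1 k - ET‖) (fun i _ => norm_nonneg _)
        (Finset.mem_range.mpr (Nat.lt_succ_of_le (hAle ω)))⟩
  have hTgint : Integrable (fun ω => T ω - g ω) μ := hTi.sub hgi
  have hprodint : Integrable (fun ω => (f1 (A ω) - ET) * (T ω - g ω)) μ :=
    hTgint.bdd_mul (c := hbdd.choose) (hintc (fun k => f1 k - ET)).aestronglyMeasurable
      (ae_of_all _ hbdd.choose_spec)
  have hcrossint : Integrable (fun ω => (g ω - ET) * (T ω - g ω)) μ :=
    hprodint.congr hecross.symm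
  have h2 : μ[g | MeasurableSpace.comap A ⊤] =ᵐ[μ] g :=
    condExp_condExp_of_le (le_refl (MeasurableSpace.comap A ⊤)) hm
  have h0 : μ[(fun ω => T ω - g ω) | MeasurableSpace.comap A ⊤] =ᵐ[μ] 0 := by
    refine ((condExp_sub hTi hgi _).trans ?_ :
      μ[T - g | MeasurableSpace.comap A ⊤] =ᵐ[μ] 0)
    filter_upwards [h2] with ω e2
    simp only [Pi.sub_apply, Pi.zero_apply]
    rw [e2, hg]
    exact sub_self _
  have hpull : μ[(fun ω => f1 (A ω) - ET) * (fun ω => T ω - g ω) |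
        MeasurableSpace.comap A ⊤]
      =ᵐ[μ] (fun ω => f1 (A ω) - ET)
        * μ[(fun ω => T ω - g ω) | MeasurableSpace.comap A ⊤] :=
    condExp_mul_of_stronglyMeasurable_left (hcompSM (fun k => f1 k - ET)) hprodint hTgint
  have hcross0 : ∫ ω, (g ω - ET) * (T ω - g ω) ∂μ = 0 := by
    rw [integral_congr_ae hecross]
    have hswap := integral_condExp (μ := μ)
      (f := (fun ω => f1 (A ω) - ET) * (fun ω => T ω - g ω)) hm
    calc ∫ ω, (f1 (A ω) - ET) * (T ω - g ω) ∂μ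
        = ∫ x, ((fun ω => f1 (A ω) - ET) * (fun ω => T ω - g ω)) x ∂μ := rfl
      _ = ∫ x, (μ[(fun ω => f1 (A ω) - ET) * (fun ω => T ω - g ω) |
            MeasurableSpace.comap A ⊤]) x ∂μ := hswap.symm
      _ = 0 := by
          refine integral_eq_zero_of_ae (hpull.trans ?_)
          filter_upwards [h0] with ω e0
          simp only [Pi.mul_apply, Pi.zero_apply]
          rw [e0]
          simp
  have hgET2int : Integrable (fun ω => (g ω - ET)^2) μ :=
    (hgL2.sub (memLp_const ET)).integrable_sq
  have hI3 : ∫ ω, (g ω - ET)^2 ∂μ = b1^2*((n:ℝ)*p*q) := by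
    have he3 : (fun ω => (g ω - ET)^2) =ᵐ[μ] fun ω => (f1 (A ω) - ET)^2 := by
      filter_upwards [hgf] with ω hω
      rw [hω]
    rw [integral_congr_ae he3, hkey (fun k => (f1 k - ET)^2)]
    have hc : ∀ k ∈ Finset.range (n+1),
        (f1 k - ET)^2 * ((n.choose k:ℝ) * p^k * q^(n-k))
          = (b1^2*((k:ℝ)*((k:ℝ)-1)) + (b1^2*(1 - 2*((n:ℝ)*p)))*(k:ℝ)
              + b1^2*((n:ℝ)*p)^2) * ((n.choose k:ℝ) * p^k * q^(n-k)) := by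
      intro k _; rw [hf1lin k, hETdef]; ring
    rw [Finset.sum_congr rfl hc, hpoly, hq]
    ring
  -- assemble
  rw [variance_eq_integral hT.aestronglyMeasurable.aemeasurable, ← show (∫ ω, (((T - fun _ => ∫ x, T x ∂μ)^(2:ℕ) : Ω → ℝ) ω) ∂μ) = ∫ ω, (T ω - ∫ x, T x ∂μ)^2 ∂μ from rfl]
  have hfun : (T - fun _ => ∫ x, T x ∂μ)^(2:ℕ) = fun ω => (T ω - ET)^2 := by
    funext ω
    simp only [Pi.pow_apply, Pi.sub_apply, hET]
  rw [hfun]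
  have hsplit : (fun ω => (T ω - ET)^2)
      = fun ω => (T ω - g ω)^2 + (2*((g ω - ET)*(T ω - g ω)) + (g ω - ET)^2) := by
    funext ω; ring
  have hmid : Integrable (fun ω => 2*((g ω - ET)*(T ω - g ω)) + (g ω - ET)^2) μ :=
    (hcrossint.const_mul 2).add hgET2int
  have hmid1 : Integrable (fun ω => 2*((g ω - ET)*(T ω - g ω))) μ :=
    hcrossint.const_mul 2
  rw [hsplit, integral_add hsqint hmid, integral_add hmid1 hgET2int,
    integral_const_mul, hcross0, mul_zero, zero_add, hI1, hI3, hb1, hb2, hc2, hq]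
  have h1p : (1:ℝ) - p ≠ 0 := by
    intro h; linarith [hp1]
  field_simp
  ring
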